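/- Alternative combinatorial sum: for n = rk + m with m ∈ {1,...,k} and r ≥ 1, the pmf of the Poisson distribution of order k satisfies p_n = e^{-kλ} [ Σ_{j=r+1}^{n} C(n-1, j-1) λ^j/j! − Σ_{i=1}^{r} (−1)^{i−1} (λ^i/i!) Σ_{j=r+1−i}^{n−ik−1} C(n − ik − 1, j + i − 1) λ^j/j! ], where any sum whose lower limit exceeds its upper limit is zero. -/

import Mathlib

open Finset

/-- The polynomial part of the pmf of the Poisson distribution of order `k`:
`P k n x = ∑_{n₁+2n₂+⋯+k·n_k = n} x^{n₁+⋯+n_k} / (n₁!⋯n_k!)`. -/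
noncomputable def poissonOrderKSum (k n : ℕ) (x : ℝ) : ℝ :=
  ∑ f ∈ ((Fintype.piFinset fun _ : Fin k => Finset.range (n + 1)).filter
      fun f => ∑ i : Fin k, (i.1 + 1) * f i = n),
    x ^ (∑ i : Fin k, f i) / ∏ i : Fin k, (Nat.factorial (f i) : ℝ)

open PowerSeries

noncomputable def SS (k : ℕ) : PowerSeries ℝ := ∑ i : Fin k, (PowerSeries.X) ^ (i.1 + 1)

lemma coeff_SS_pow (k n j : ℕ) :
    (PowerSeries.coeff (R := ℝ) n) (SS k ^ j) =
      ∑ g ∈ (Finset.piAntidiag (univ : Finset (Fin k)) j).filter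
          (fun g => ∑ i : Fin k, (i.1 + 1) * g i = n), (Nat.multinomial univ g : ℝ) := by
  rw [SS, Finset.sum_pow_eq_sum_piAntidiag, map_sum, Finset.sum_filter]
  refine Finset.sum_congr rfl fun g hg => ?_
  have h1 : ∏ i : Fin k, ((PowerSeries.X : ℝ⟦X⟧) ^ (i.1 + 1)) ^ g i
      = PowerSeries.X ^ (∑ i : Fin k, (i.1 + 1) * g i) := by
    simp_rw [← pow_mul]
    rw [Finset.prod_pow_eq_pow_sum]
  rw [h1, ← map_natCast (PowerSeries.C (R := ℝ)) (Nat.multinomial univ g), PowerSeries.coeff_C_mul,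
    PowerSeries.coeff_X_pow]
  by_cases h : ∑ i : Fin k, (i.1 + 1) * g i = n
  · simp [h]
  · simp [h, Ne.symm h]

lemma coeff_SS_pow_eq_zero (k n j : ℕ) (h : j * k < n) :
    (PowerSeries.coeff (R := ℝ) n) (SS k ^ j) = 0 := by
  rw [coeff_SS_pow]
  apply Finset.sum_eq_zero
  intro g hg
  exfalso
  simp only [Finset.mem_filter, Finset.mem_piAntidiag] at hg
  obtain ⟨⟨hsum, -⟩, hwt⟩ := hg
  have hb : ∑ i : Fin k, (i.1 + 1) * g i ≤ ∑ i : Fin k, k * g i := by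
    apply Finset.sum_le_sum
    intro i _
    exact Nat.mul_le_mul_right _ i.2
  rw [← Finset.mul_sum, hsum, Nat.mul_comm] at hb
  omega


lemma poissonOrderKSum_eq_sum_coeff (k n : ℕ) (x : ℝ) :
    poissonOrderKSum k n x =
      ∑ j ∈ Finset.range (n + 1),
        (PowerSeries.coeff (R := ℝ) n) (SS k ^ j) * x ^ j / (Nat.factorial j : ℝ) := by
  rw [poissonOrderKSum]
  rw [← Finset.sum_fiberwise_of_maps_to (g := fun f => ∑ i : Fin k, f i)
    (t := Finset.range (n + 1)) ?_ _]
  · refine Finset.sum_congr rfl fun j hj => ?_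
    rw [coeff_SS_pow, Finset.sum_mul, Finset.sum_div]
    refine Finset.sum_congr ?_ ?_
    · ext g
      simp only [Finset.mem_filter, Fintype.mem_piFinset, Finset.mem_piAntidiag,
        Finset.mem_range, Finset.mem_univ, implies_true, and_true, ne_eq]
      constructor
      · rintro ⟨⟨-, hwt⟩, hsum⟩
        exact ⟨hsum, hwt⟩
      · rintro ⟨hsum, hwt⟩
        refine ⟨⟨fun i => ?_, hwt⟩, hsum⟩
        have h1 : (i.1 + 1) * g i ≤ ∑ i' : Fin k, (i'.1 + 1) * g i' :=
          Finset.single_le_sum (f := fun i' : Fin k => (i'.1 + 1) * g i')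
            (fun _ _ => Nat.zero_le _) (Finset.mem_univ i)
        have h2 : g i ≤ (i.1 + 1) * g i := Nat.le_mul_of_pos_left _ (Nat.succ_pos _)
        omega
    · intro g hg
      simp only [Finset.mem_filter, Finset.mem_piAntidiag] at hg
      obtain ⟨⟨hsum, -⟩, -⟩ := hg
      have hspec := Nat.multinomial_spec (univ : Finset (Fin k)) g
      rw [hsum] at hspec
      have hprod : (∏ i : Fin k, (Nat.factorial (g i) : ℝ)) ≠ 0 := by
        apply Finset.prod_ne_zero_iff.2
        intro i _
        exact_mod_cast Nat.factorial_ne_zero _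
      have hfac : (Nat.factorial j : ℝ) ≠ 0 := by exact_mod_cast Nat.factorial_ne_zero _
      have hcast : (∏ i : Fin k, (Nat.factorial (g i) : ℝ)) * (Nat.multinomial univ g : ℝ)
          = (Nat.factorial j : ℝ) := by exact_mod_cast congrArg (Nat.cast (R := ℝ)) hspec
      rw [hsum]
      field_simp
      linarith [congrArg (· * x ^ j) hcast]
  · intro f hf
    simp only [Finset.mem_filter, Fintype.mem_piFinset, Finset.mem_range] at hf ⊢
    obtain ⟨-, hwt⟩ := hf
    have : ∑ i : Fin k, f i ≤ ∑ i : Fin k, (i.1 + 1) * f i := by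
      apply Finset.sum_le_sum
      intro i _
      exact Nat.le_mul_of_pos_left _ (Nat.succ_pos _)
    omega

lemma SS_mul_one_sub (k : ℕ) :
    SS k * (1 - PowerSeries.X) = PowerSeries.X - PowerSeries.X ^ (k + 1) := by
  rw [SS, Fin.sum_univ_eq_sum_range (fun i => (PowerSeries.X : ℝ⟦X⟧) ^ (i + 1)), Finset.sum_mul]
  have h : ∀ i : ℕ, (PowerSeries.X : ℝ⟦X⟧) ^ (i + 1) * (1 - PowerSeries.X)
      = PowerSeries.X ^ (i + 1) - PowerSeries.X ^ (i + 1 + 1) := by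
    intro i; ring
  simp_rw [h]
  rw [Finset.sum_range_sub' (fun i => (PowerSeries.X : ℝ⟦X⟧) ^ (i + 1))]
  simp

lemma SS_pow_eq (k j : ℕ) :
    SS k ^ j = (PowerSeries.X - PowerSeries.X ^ (k + 1)) ^ j *
      ((PowerSeries.invOneSubPow ℝ j).val) := by
  have h1 : SS k ^ j * (1 - PowerSeries.X) ^ j
      = (PowerSeries.X - PowerSeries.X ^ (k + 1)) ^ j := by
    rw [← mul_pow, SS_mul_one_sub]
  have h2 : ((1 : ℝ⟦X⟧) - PowerSeries.X) ^ j * (PowerSeries.invOneSubPow ℝ j).val = 1 := by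
    rw [← PowerSeries.invOneSubPow_inv_eq_one_sub_pow]
    exact (PowerSeries.invOneSubPow ℝ j).inv_val
  calc SS k ^ j = SS k ^ j * (((1 : ℝ⟦X⟧) - PowerSeries.X) ^ j *
        (PowerSeries.invOneSubPow ℝ j).val) := by rw [h2, mul_one]
    _ = (SS k ^ j * ((1 : ℝ⟦X⟧) - PowerSeries.X) ^ j) *
        (PowerSeries.invOneSubPow ℝ j).val := by ring
    _ = _ := by rw [h1]

lemma coeff_SS_pow' (k n j : ℕ) (hj : 1 ≤ j) (hkn : k < n) :
    (PowerSeries.coeff (R := ℝ) n) (SS k ^ j) =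
      ∑ i ∈ Finset.range (j + 1),
        (-1 : ℝ) ^ i * (Nat.choose j i : ℝ) * (Nat.choose (n - i * k - 1) (j - 1) : ℝ) := by
  have hXX : (PowerSeries.X - PowerSeries.X ^ (k + 1) : ℝ⟦X⟧) ^ j
      = ∑ i ∈ Finset.range (j + 1),
          PowerSeries.C (R := ℝ) ((-1 : ℝ) ^ i * (Nat.choose j i : ℝ)) *
            PowerSeries.X ^ (j + k * i) := by
    have h0 : (PowerSeries.X - PowerSeries.X ^ (k + 1) : ℝ⟦X⟧)
        = PowerSeries.X * (1 - PowerSeries.X ^ k) := by ring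
    rw [h0, mul_pow, sub_pow]
    rw [Finset.mul_sum, ← Finset.sum_range_reflect]
    refine Finset.sum_congr rfl fun i hi => ?_
    simp only [Finset.mem_range] at hi
    have hij : i ≤ j := by omega
    have hsign : (-1 : ℝ⟦X⟧) ^ (j - i + j) = (-1) ^ i := by
      rw [show j - i + j = i + 2 * (j - i) by omega, pow_add, pow_mul]
      simp
    have e1 : j + 1 - 1 - i = j - i := by omega
    rw [e1, Nat.choose_symm hij]
    have e2 : j - (j - i) = i := by omega
    rw [e2, hsign]
    rw [one_pow, ← pow_mul, map_mul, map_pow, map_neg, map_one, map_natCast]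
    ring
  rw [SS_pow_eq, hXX, Finset.sum_mul, map_sum]
  refine Finset.sum_congr rfl fun i hi => ?_
  simp only [Finset.mem_range] at hi
  have hij : i ≤ j := by omega
  rw [mul_assoc, PowerSeries.coeff_C_mul, PowerSeries.coeff_X_pow_mul',
    PowerSeries.invOneSubPow_val_eq_mk_sub_one_add_choose_of_pos ℝ j hj, PowerSeries.coeff_mk]
  have hik : i = 0 ∧ i * k = 0 ∨ i = 1 ∧ i * k = k ∨ 2 ≤ i ∧ 2 * k ≤ i * k := by
    match i with
    | 0 => left; simp
    | 1 => right; left; simp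
    | (m + 2) =>
      right; right
      exact ⟨by omega, Nat.mul_le_mul_right k (by omega)⟩
  have hki : k * i = i * k := Nat.mul_comm k i
  split_ifs with h
  · have : j - 1 + (n - (j + k * i)) = n - i * k - 1 := by omega
    rw [this]
  · have hz : Nat.choose (n - i * k - 1) (j - 1) = 0 := by
      apply Nat.choose_eq_zero_of_lt
      omega
    rw [hz]
    simp

lemma main_sum (k n r m : ℕ) (hk : 2 ≤ k) (hr : 1 ≤ r) (hm1 : 1 ≤ m) (hmk : m ≤ k)
    (hn : n = r * k + m) (lam : ℝ) :
    ∑ j ∈ Finset.range (n + 1),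
        (PowerSeries.coeff (R := ℝ) n) (SS k ^ j) * lam ^ j / (Nat.factorial j : ℝ) =
      (∑ j ∈ Finset.Icc (r + 1) n,
            (Nat.choose (n - 1) (j - 1) : ℝ) * lam ^ j / (Nat.factorial j : ℝ))
        - ∑ i ∈ Finset.Icc 1 r, (-1 : ℝ) ^ (i - 1) * lam ^ i / (Nat.factorial i : ℝ) *
            ∑ j ∈ Finset.Icc (r + 1 - i) (n - i * k - 1),
              (Nat.choose (n - i * k - 1) (j + i - 1) : ℝ) * lam ^ j /
                (Nat.factorial j : ℝ) := by
  have hkr : k ≤ r * k := Nat.le_mul_of_pos_left k hr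
  have hkn : k < n := by omega
  have hrkn : r * k < n := by omega
  have hrrk : r ≤ r * k := Nat.le_mul_of_pos_right r (by omega)
  -- abbreviation for terms
  set t : ℕ → ℕ → ℝ := fun j i =>
    (-1 : ℝ) ^ i * (Nat.choose j i : ℝ) * (Nat.choose (n - i * k - 1) (j - 1) : ℝ)
      * lam ^ j / (Nat.factorial j : ℝ) with ht
  -- Step 1: restrict to Icc (r+1) n and expand by coeff_SS_pow'
  have step1 : ∑ j ∈ Finset.range (n + 1),
      (PowerSeries.coeff (R := ℝ) n) (SS k ^ j) * lam ^ j / (Nat.factorial j : ℝ) =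
      ∑ j ∈ Finset.Icc (r + 1) n, ∑ i ∈ Finset.range (j + 1), t j i := by
    rw [← Finset.sum_subset (s₁ := Finset.Icc (r + 1) n) (s₂ := Finset.range (n + 1))
      (by intro j hj; simp only [Finset.mem_Icc] at hj; simp only [Finset.mem_range]; omega)
      (by
        intro j hj hj'
        simp only [Finset.mem_range] at hj
        simp only [Finset.mem_Icc] at hj'
        have hjr : j ≤ r := by omega
        have : j * k ≤ r * k := Nat.mul_le_mul_right k hjr
        rw [coeff_SS_pow_eq_zero k n j (by omega)]
        simp)]
    refine Finset.sum_congr rfl fun j hj => ?_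
    simp only [Finset.mem_Icc] at hj
    rw [coeff_SS_pow' k n j (by omega) hkn, Finset.sum_mul, Finset.sum_div]
  rw [step1]
  -- Step 2: split off i = 0
  have hins : ∀ j : ℕ, Finset.range (j + 1) = insert 0 (Finset.Icc 1 j) := by
    intro j; ext i; simp [Finset.mem_Icc]; omega
  have step2 : ∀ j ∈ Finset.Icc (r + 1) n,
      ∑ i ∈ Finset.range (j + 1), t j i =
        (Nat.choose (n - 1) (j - 1) : ℝ) * lam ^ j / (Nat.factorial j : ℝ)
          + ∑ i ∈ Finset.Icc 1 j, t j i := by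
    intro j hj
    rw [hins j, Finset.sum_insert (by simp)]
    congr 1
    simp [ht]
  rw [Finset.sum_congr rfl step2, Finset.sum_add_distrib]
  -- Step 3: handle the double sum
  have step3 : ∑ j ∈ Finset.Icc (r + 1) n, ∑ i ∈ Finset.Icc 1 j, t j i =
      ∑ i ∈ Finset.Icc 1 r, ∑ j ∈ Finset.Icc (r + 1) n, t j i := by
    have e1 : ∀ j ∈ Finset.Icc (r + 1) n,
        ∑ i ∈ Finset.Icc 1 j, t j i = ∑ i ∈ Finset.Icc 1 n, t j i := by
      intro j hj
      simp only [Finset.mem_Icc] at hj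
      apply Finset.sum_subset
      · intro i hi; simp only [Finset.mem_Icc] at hi ⊢; omega
      · intro i hi hi'
        simp only [Finset.mem_Icc] at hi hi'
        have : Nat.choose j i = 0 := Nat.choose_eq_zero_of_lt (by omega)
        simp [ht, this]
    rw [Finset.sum_congr rfl e1, Finset.sum_comm]
    apply (Finset.sum_subset ?_ ?_).symm
    · intro i hi; simp only [Finset.mem_Icc] at hi ⊢; omega
    · intro i hi hi'
      simp only [Finset.mem_Icc] at hi hi'
      apply Finset.sum_eq_zero
      intro j hj
      simp only [Finset.mem_Icc] at hj
      have h1 : (r + 1) * k ≤ i * k := Nat.mul_le_mul_right k (by omega)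
      have h2 : (r + 1) * k = r * k + k := by ring
      have : Nat.choose (n - i * k - 1) (j - 1) = 0 := by
        apply Nat.choose_eq_zero_of_lt
        omega
      simp [ht, this]
  rw [step3]
  -- Step 4: per i, reindex the inner sum
  have step4 : ∀ i ∈ Finset.Icc 1 r,
      ∑ j ∈ Finset.Icc (r + 1) n, t j i =
        (-1 : ℝ) ^ i * lam ^ i / (Nat.factorial i : ℝ) *
          ∑ j ∈ Finset.Icc (r + 1 - i) (n - i * k - 1),
            (Nat.choose (n - i * k - 1) (j + i - 1) : ℝ) * lam ^ j /
              (Nat.factorial j : ℝ) := by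
    intro i hi
    simp only [Finset.mem_Icc] at hi
    have hik : i ≤ i * k := Nat.le_mul_of_pos_right i (by omega)
    have hikr : i * k ≤ r * k := Nat.mul_le_mul_right k hi.2
    -- reindex j = j' + i
    have hmap : (Finset.Icc (r + 1 - i) (n - i)).map (addRightEmbedding i)
        = Finset.Icc (r + 1) n := by
      rw [Finset.map_add_right_Icc]
      congr 1 <;> omega
    rw [← hmap, Finset.sum_map]
    simp only [addRightEmbedding_apply]
    -- shrink the interval
    rw [← Finset.sum_subset (s₁ := Finset.Icc (r + 1 - i) (n - i * k - 1))
      (by intro j hj; simp only [Finset.mem_Icc] at hj ⊢; omega)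
      (by
        intro j hj hj'
        simp only [Finset.mem_Icc] at hj hj'
        have : Nat.choose (n - i * k - 1) (j + i - 1) = 0 := by
          apply Nat.choose_eq_zero_of_lt
          omega
        simp [ht, this])]
    rw [Finset.mul_sum]
    refine Finset.sum_congr rfl fun j hj => ?_
    simp only [Finset.mem_Icc] at hj
    have hch : (Nat.choose (j + i) i : ℝ) * (Nat.factorial j : ℝ) * (Nat.factorial i : ℝ)
        = (Nat.factorial (j + i) : ℝ) := by
      exact_mod_cast congrArg (Nat.cast (R := ℝ)) (Nat.add_choose_mul_factorial_mul_factorial j i)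
    have hfi : (Nat.factorial i : ℝ) ≠ 0 := by exact_mod_cast Nat.factorial_ne_zero i
    have hfj : (Nat.factorial j : ℝ) ≠ 0 := by exact_mod_cast Nat.factorial_ne_zero j
    have hfij : (Nat.factorial (j + i) : ℝ) ≠ 0 := by exact_mod_cast Nat.factorial_ne_zero (j + i)
    have key : (Nat.choose (j + i) i : ℝ)
        = (Nat.factorial (j + i) : ℝ) / ((Nat.factorial j : ℝ) * (Nat.factorial i : ℝ)) := by
      field_simp
      linarith [hch]
    simp only [ht]
    rw [key, pow_add]
    field_simp
  rw [Finset.sum_congr rfl step4]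
  -- Step 5: final sign bookkeeping
  rw [sub_eq_add_neg, ← Finset.sum_neg_distrib]
  congr 1
  refine Finset.sum_congr rfl fun i hi => ?_
  simp only [Finset.mem_Icc] at hi
  have hs : (-1 : ℝ) ^ i = -(-1 : ℝ) ^ (i - 1) := by
    conv_lhs => rw [show i = (i - 1) + 1 by omega]
    rw [pow_succ]
    ring
  rw [hs]
  ring


theorem poissonOrderK_alternative_formula (k n r m : ℕ) (hk : 2 ≤ k) (hr : 1 ≤ r)
    (hm1 : 1 ≤ m) (hmk : m ≤ k) (hn : n = r * k + m) (lam : ℝ) (hlam : 0 < lam) :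
    Real.exp (-(k * lam)) * poissonOrderKSum k n lam =
      Real.exp (-(k * lam)) *
        ((∑ j ∈ Finset.Icc (r + 1) n,
            (Nat.choose (n - 1) (j - 1) : ℝ) * lam ^ j / (Nat.factorial j : ℝ))
          - ∑ i ∈ Finset.Icc 1 r, (-1 : ℝ) ^ (i - 1) * lam ^ i / (Nat.factorial i : ℝ) *
              ∑ j ∈ Finset.Icc (r + 1 - i) (n - i * k - 1),
                (Nat.choose (n - i * k - 1) (j + i - 1) : ℝ) * lam ^ j /
                  (Nat.factorial j : ℝ)) := by
  rw [poissonOrderKSum_eq_sum_coeff, main_sum k n r m hk hr hm1 hmk hn lam]
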